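/- Fix an integer m ≥ 1 and a real w > 0, and set k_n = ⌈w log n⌉. For each n ≥ 2 let β_r^{(n)} be the coefficient of x^r in P(x) = ∏_{i=0}^{k_n-1} (1 - i/n + x)^{m+1}, and let S denote the Stirling number of the second kind. Then lim_{n→∞} [∑_{r=k_n-1}^{k_n(m+1)} n^{-r} β_r^{(n)} S(r, k_n-1)] / [n^{-(k_n-1)} β_{k_n-1}^{(n)}] = 1; that is, the sum is asymptotically equal to its first term. -/

import Mathlib

open Filter

/-- Stirling numbers of the second kind: `stirling2 n k` is the number of partitions of an
`n`-element set into `k` nonempty blocks, via the standard recurrence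
`S(n+1, k+1) = (k+1) S(n, k+1) + S(n, k)`. -/
def stirling2 : ℕ → ℕ → ℕ
  | 0, 0 => 1
  | 0, _ + 1 => 0
  | _ + 1, 0 => 0
  | n + 1, k + 1 => (k + 1) * stirling2 n (k + 1) + stirling2 n k

open Polynomial Finset

lemma stirling2_eq_zero {n k : ℕ} (h : n < k) : stirling2 n k = 0 := by
  induction n generalizing k with
  | zero => cases k with
    | zero => omega
    | succ k => rfl
  | succ n ih =>
    cases k with
    | zero => omega
    | succ k =>
      show (k + 1) * stirling2 n (k + 1) + stirling2 n k = 0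
      rw [ih (by omega), ih (by omega)]
      ring

lemma stirling2_self (n : ℕ) : stirling2 n n = 1 := by
  induction n with
  | zero => rfl
  | succ n ih =>
    show (n + 1) * stirling2 n (n + 1) + stirling2 n n = 1
    rw [stirling2_eq_zero (by omega), ih]
    ring

lemma stirling2_le (n k : ℕ) : stirling2 n k ≤ n.choose k * k ^ (n - k) := by
  induction n generalizing k with
  | zero => cases k with
    | zero => simp [stirling2]
    | succ k => simp [stirling2_eq_zero]
  | succ n ih =>
    cases k with
    | zero => exact Nat.zero_le _
    | succ k =>
      show (k + 1) * stirling2 n (k + 1) + stirling2 n k ≤ _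
      rcases lt_trichotomy n k with h | h | h
      · rw [stirling2_eq_zero (by omega : n < k + 1), stirling2_eq_zero h,
          Nat.choose_eq_zero_of_lt (by omega)]
        simp
      · subst h
        rw [stirling2_eq_zero (by omega : n < n + 1), stirling2_self,
          Nat.succ_sub_succ, Nat.sub_self, pow_zero, Nat.choose_self]
        simp
      have h1 : (k + 1) * stirling2 n (k + 1) ≤ n.choose (k+1) * (k+1) ^ (n - k) := by
        calc (k + 1) * stirling2 n (k + 1) ≤ (k+1) * (n.choose (k+1) * (k+1) ^ (n - (k+1))) :=
              Nat.mul_le_mul_left _ (ih (k+1))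
          _ = n.choose (k+1) * ((k+1) ^ (n - (k+1)) * (k+1)) := by ring
          _ = n.choose (k+1) * (k+1) ^ (n - k) := by
              have he : n - k = n - (k+1) + 1 := by omega
              -- needs k < n, have h : k < n
              rw [he, pow_succ]
      have h2 : stirling2 n k ≤ n.choose k * (k+1) ^ (n - k) := by
        calc stirling2 n k ≤ n.choose k * k ^ (n - k) := ih k
          _ ≤ n.choose k * (k+1) ^ (n - k) :=
            Nat.mul_le_mul_left _ (Nat.pow_le_pow_left (by omega) _)
      calc (k + 1) * stirling2 n (k + 1) + stirling2 n k
          ≤ n.choose (k+1) * (k+1) ^ (n - k) + n.choose k * (k+1) ^ (n - k) :=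
            Nat.add_le_add h1 h2
        _ = (n.choose (k+1) + n.choose k) * (k+1) ^ (n - k) := by ring
        _ = (n+1).choose (k+1) * (k+1) ^ (n + 1 - (k+1)) := by
            rw [Nat.succ_sub_succ, Nat.choose_succ_succ']
            ring

open Polynomial

lemma coeff_mul_nonneg (p q : ℝ[X]) (hp : ∀ r, 0 ≤ p.coeff r) (hq : ∀ r, 0 ≤ q.coeff r) :
    ∀ r, 0 ≤ (p * q).coeff r := by
  intro r
  rw [coeff_mul]
  exact Finset.sum_nonneg fun x _ => mul_nonneg (hp x.1) (hq x.2)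

lemma coeff_prod_nonneg {ι : Type*} (s : Finset ι) (f : ι → ℝ[X])
    (h : ∀ i ∈ s, ∀ r, 0 ≤ (f i).coeff r) : ∀ r, 0 ≤ (∏ i ∈ s, f i).coeff r := by
  classical
  induction s using Finset.cons_induction with
  | empty => intro r; rcases Nat.eq_zero_or_pos r with rfl | hr
             · simp
             · simp [Polynomial.coeff_one, Nat.pos_iff_ne_zero.mp hr]
  | cons a s ha ih =>
    rw [Finset.prod_cons]
    exact coeff_mul_nonneg _ _ (h a (Finset.mem_cons_self a s))
      (ih fun i hi => h i (Finset.mem_cons_of_mem hi))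

lemma coeff_mul_le (p q P Q : ℝ[X]) (hp : ∀ r, 0 ≤ p.coeff r) (hq : ∀ r, 0 ≤ q.coeff r)
    (hpP : ∀ r, p.coeff r ≤ P.coeff r) (hqQ : ∀ r, q.coeff r ≤ Q.coeff r) :
    ∀ r, (p * q).coeff r ≤ (P * Q).coeff r := by
  intro r
  rw [coeff_mul, coeff_mul]
  apply Finset.sum_le_sum
  intro x _
  exact mul_le_mul (hpP x.1) (hqQ x.2) (hq x.2) ((hp x.1).trans (hpP x.1))

lemma coeff_prod_le {ι : Type*} (s : Finset ι) (f g : ι → ℝ[X])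
    (h0 : ∀ i ∈ s, ∀ r, 0 ≤ (f i).coeff r)
    (hle : ∀ i ∈ s, ∀ r, (f i).coeff r ≤ (g i).coeff r) :
    ∀ r, (∏ i ∈ s, f i).coeff r ≤ (∏ i ∈ s, g i).coeff r := by
  classical
  induction s using Finset.cons_induction with
  | empty => intro r; simp
  | cons a s ha ih =>
    rw [Finset.prod_cons, Finset.prod_cons]
    exact coeff_mul_le _ _ _ _ (h0 a (Finset.mem_cons_self a s))
      (coeff_prod_nonneg s f fun i hi => h0 i (Finset.mem_cons_of_mem hi))
      (hle a (Finset.mem_cons_self a s))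
      (ih (fun i hi => h0 i (Finset.mem_cons_of_mem hi))
          (fun i hi => hle i (Finset.mem_cons_of_mem hi)))

open Polynomial Finset

lemma choose_add_le (N K : ℕ) : ∀ t, N.choose (K + t) ≤ N ^ t * N.choose K
  | 0 => by simp
  | t+1 => by
    have h1 : N.choose (K + t + 1) ≤ N * N.choose (K + t) := by
      calc N.choose (K+t+1) ≤ N.choose (K+t+1) * (K+t+1) :=
            Nat.le_mul_of_pos_right _ (by omega)
        _ = N.choose (K+t) * (N - (K+t)) := Nat.choose_succ_right_eq N (K + t)
        _ ≤ N.choose (K+t) * N := Nat.mul_le_mul_left _ (Nat.sub_le _ _)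
        _ = N * N.choose (K+t) := Nat.mul_comm _ _
    calc N.choose (K + (t+1)) = N.choose (K + t + 1) := by rw [Nat.add_assoc]
      _ ≤ N * N.choose (K+t) := h1
      _ ≤ N * (N^t * N.choose K) := Nat.mul_le_mul_left _ (choose_add_le N K t)
      _ = N^(t+1) * N.choose K := by ring

lemma coeff_C_add_X_pow (a : ℝ) (M r : ℕ) :
    ((C a + X) ^ M).coeff r = a ^ (M - r) * (M.choose r : ℝ) := by
  rw [add_comm (C a) X, coeff_X_add_C_pow]

lemma geom_aux {q : ℝ} (hq0 : 0 ≤ q) (hq : q ≤ 1/2) :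
    ∀ M, ∑ t ∈ Finset.Icc 1 M, q ^ t ≤ 2 * q * (1 - q ^ M)
  | 0 => by simp
  | M+1 => by
    rw [Finset.sum_Icc_succ_top (by omega)]
    have ih := geom_aux hq0 hq M
    have hqM : 0 ≤ q ^ M := pow_nonneg hq0 M
    nlinarith [pow_nonneg hq0 (M+1), pow_succ q M]

lemma geom_aux' {q : ℝ} (hq0 : 0 ≤ q) (hq : q ≤ 1/2) (M : ℕ) :
    ∑ t ∈ Finset.Icc 1 M, q ^ t ≤ 2 * q := by
  have := geom_aux hq0 hq M
  nlinarith [pow_nonneg hq0 M]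

set_option maxHeartbeats 1000000 in
lemma main_bound (m K n : ℕ) (hm : 1 ≤ m) (hn : 1 ≤ n)
    (hq : ((m:ℝ)+1)^2 * ((K:ℝ)+1)^3 / (n:ℝ) ≤ 1/2) :
    1 ≤ (∑ r ∈ Finset.Icc K ((K+1)*(m+1)),
          ((n:ℝ)^r)⁻¹ * (∏ i ∈ Finset.range (K+1),
            (C (1 - (i:ℝ)/(n:ℝ)) + X)^(m+1)).coeff r * (stirling2 r K : ℝ)) /
        (((n:ℝ)^K)⁻¹ * (∏ i ∈ Finset.range (K+1),
            (C (1 - (i:ℝ)/(n:ℝ)) + X)^(m+1)).coeff K)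
    ∧ (∑ r ∈ Finset.Icc K ((K+1)*(m+1)),
          ((n:ℝ)^r)⁻¹ * (∏ i ∈ Finset.range (K+1),
            (C (1 - (i:ℝ)/(n:ℝ)) + X)^(m+1)).coeff r * (stirling2 r K : ℝ)) /
        (((n:ℝ)^K)⁻¹ * (∏ i ∈ Finset.range (K+1),
            (C (1 - (i:ℝ)/(n:ℝ)) + X)^(m+1)).coeff K)
      ≤ 1 + 4 * (((m:ℝ)+1)^2 * ((K:ℝ)+1)^3 / (n:ℝ)) := by
  set N : ℕ := (K+1)*(m+1) with hN
  set P : ℝ[X] := ∏ i ∈ Finset.range (K+1), (C (1 - (i:ℝ)/(n:ℝ)) + X)^(m+1) with hP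
  have hn0 : (0:ℝ) < n := by exact_mod_cast hn
  have hm2 : (2:ℝ) ≤ (m:ℝ) + 1 := by exact_mod_cast Nat.succ_le_succ hm
  have hK1 : (1:ℝ) ≤ (K:ℝ) + 1 := by
    have := Nat.cast_nonneg (α := ℝ) K; linarith
  have hq' : ((m:ℝ)+1)^2 * ((K:ℝ)+1)^3 ≤ (n:ℝ)/2 := by
    rw [div_le_iff₀ hn0] at hq; linarith
  have hcube : (K:ℝ) + 1 ≤ ((K:ℝ)+1)^3 := le_self_pow₀ hK1 (by norm_num)
  have hsq : (4:ℝ) ≤ ((m:ℝ)+1)^2 := by nlinarith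
  have hKn : (K:ℝ) + 1 ≤ n := by nlinarith
  have hKnn : K + 1 ≤ n := by exact_mod_cast hKn
  have hc0 : (0:ℝ) ≤ 1 - (K:ℝ)/n := by
    rw [sub_nonneg, div_le_one hn0]; linarith
  have hc1 : 1 - (K:ℝ)/n ≤ 1 := by
    have : 0 ≤ (K:ℝ)/n := by positivity
    linarith
  set c : ℝ := 1 - (K:ℝ)/n with hc
  -- per-factor bounds
  have hin : ∀ i ∈ Finset.range (K+1), c ≤ 1 - (i:ℝ)/n ∧ 1 - (i:ℝ)/n ≤ 1 := by
    intro i hi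
    have hiK : (i:ℝ) ≤ K := by
      exact_mod_cast Nat.lt_succ_iff.mp (Finset.mem_range.mp hi)
    constructor
    · rw [hc]; gcongr
    · have : 0 ≤ (i:ℝ)/n := by positivity
      linarith
  have hfact_nonneg : ∀ i ∈ Finset.range (K+1), ∀ r,
      0 ≤ ((C (1 - (i:ℝ)/n) + X)^(m+1)).coeff r := by
    intro i hi r
    rw [coeff_C_add_X_pow]
    have h1 := (hin i hi).1
    have : 0 ≤ 1 - (i:ℝ)/n := le_trans hc0 h1
    positivity
  have hβ_nonneg : ∀ r, 0 ≤ P.coeff r := coeff_prod_nonneg _ _ hfact_nonneg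
  have hup : ∀ r, P.coeff r ≤ (N.choose r : ℝ) := by
    intro r
    have h := coeff_prod_le (Finset.range (K+1)) _
      (fun _ => (C (1:ℝ) + X)^(m+1)) hfact_nonneg ?_ r
    · rw [Finset.prod_const, Finset.card_range, ← pow_mul, coeff_C_add_X_pow] at h
      rw [one_pow, one_mul, Nat.mul_comm] at h
      exact h
    · intro i hi r'
      rw [coeff_C_add_X_pow, coeff_C_add_X_pow]
      have h1 := (hin i hi).1
      have h2 := (hin i hi).2
      have h0 : 0 ≤ 1 - (i:ℝ)/n := le_trans hc0 h1
      have h3 : (1 - (i:ℝ)/n) ^ ((m+1) - r') ≤ 1 ^ ((m+1) - r') :=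
        pow_le_pow_left₀ h0 h2 _
      have hch : (0:ℝ) ≤ ((m+1).choose r' : ℝ) := Nat.cast_nonneg _
      exact mul_le_mul_of_nonneg_right h3 hch
  have hlow : (c ^ (N - K)) * (N.choose K : ℝ) ≤ P.coeff K := by
    have h := coeff_prod_le (Finset.range (K+1))
      (fun _ => (C c + X)^(m+1))
      (fun i => (C (1 - (i:ℝ)/(n:ℝ)) + X)^(m+1))
      (by
        intro i hi r
        rw [coeff_C_add_X_pow]
        positivity)
      (by
        intro i hi r'
        rw [coeff_C_add_X_pow, coeff_C_add_X_pow]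
        exact mul_le_mul_of_nonneg_right
          (pow_le_pow_left₀ hc0 (hin i hi).1 _) (Nat.cast_nonneg _)) K
    rw [Finset.prod_const, Finset.card_range, ← pow_mul, coeff_C_add_X_pow,
      Nat.mul_comm] at h
    exact h
  have hNcast : (N:ℝ) = ((K:ℝ)+1)*((m:ℝ)+1) := by rw [hN]; push_cast; ring
  have hNK : (N:ℝ)*(K:ℝ)/(n:ℝ) ≤ 1/2 := by
    have hb : (N:ℝ)*(K:ℝ) ≤ ((m:ℝ)+1)^2*((K:ℝ)+1)^3 := by
      rw [hNcast]
      have hK0 : (0:ℝ) ≤ (K:ℝ) := Nat.cast_nonneg K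
      have e0 : (K:ℝ) ≤ 2*((K:ℝ)+1)^2 := by nlinarith [sq_nonneg ((K:ℝ)+1)]
      have e0' : 2*((K:ℝ)+1)^2 ≤ ((m:ℝ)+1)*((K:ℝ)+1)^2 :=
        mul_le_mul_of_nonneg_right hm2 (by positivity)
      have e1 : (K:ℝ) ≤ ((m:ℝ)+1)*((K:ℝ)+1)^2 := le_trans e0 e0'
      have e2 := mul_le_mul_of_nonneg_left e1
        (show (0:ℝ) ≤ ((K:ℝ)+1)*((m:ℝ)+1) by positivity)
      nlinarith [e2]
    calc (N:ℝ)*(K:ℝ)/(n:ℝ) ≤ ((m:ℝ)+1)^2*((K:ℝ)+1)^3/(n:ℝ) := by gcongr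
      _ ≤ 1/2 := hq
  have hcN2 : (1:ℝ)/2 ≤ c^(N-K) := by
    have hKn' : (K:ℝ)/n ≤ 1 := by rw [div_le_one hn0]; linarith
    have hb := one_add_mul_le_pow (by nlinarith : (-2:ℝ) ≤ -((K:ℝ)/n)) N
    have hcc : (1 + -((K:ℝ)/n)) = c := by rw [hc]; ring
    rw [hcc] at hb
    have h1 : (1:ℝ)/2 ≤ c^N := by
      have hmul : (N:ℝ) * ((K:ℝ)/n) = (N:ℝ)*(K:ℝ)/n := by ring
      nlinarith
    have h2 : c^N ≤ c^(N-K) := pow_le_pow_of_le_one hc0 hc1 (Nat.sub_le N K)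
    linarith
  have hβK2 : (N.choose K : ℝ)/2 ≤ P.coeff K := by
    have := mul_le_mul_of_nonneg_right hcN2 (Nat.cast_nonneg (α := ℝ) (N.choose K))
    calc (N.choose K:ℝ)/2 = 1/2 * (N.choose K:ℝ) := by ring
      _ ≤ c^(N-K) * (N.choose K:ℝ) := this
      _ ≤ P.coeff K := hlow
  have hKN : K + 1 ≤ N := by
    calc K + 1 = (K+1)*1 := by ring
      _ ≤ (K+1)*(m+1) := Nat.mul_le_mul_left _ (by omega)
  have hchpos : (0:ℝ) < (N.choose K : ℝ) := by
    exact_mod_cast Nat.choose_pos (by omega : K ≤ N)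
  have hβKpos : 0 < P.coeff K := lt_of_lt_of_le (by linarith) hβK2
  set D := ((n:ℝ)^K)⁻¹ * P.coeff K with hD
  have hDpos : 0 < D := mul_pos (inv_pos.2 (pow_pos hn0 K)) hβKpos
  set q : ℝ := ((m:ℝ)+1)^2*((K:ℝ)+1)^3/(n:ℝ) with hqdef
  have hq0 : (0:ℝ) ≤ q := by rw [hqdef]; positivity
  -- termwise bound
  have hterm : ∀ r ∈ Finset.Icc (K+1) N,
      ((n:ℝ)^r)⁻¹ * P.coeff r * (stirling2 r K : ℝ) ≤ 2*D*q^(r-K) := by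
    intro r hr
    obtain ⟨hr1, hr2⟩ := Finset.mem_Icc.mp hr
    set t := r - K with ht
    have hrKt : r = K + t := by omega
    have hb1 : N.choose r ≤ N^t * N.choose K := by
      rw [hrKt]; exact choose_add_le N K t
    have hb3 : r.choose K ≤ N^t := by
      have h4 : r.choose K = r.choose t := by
        rw [ht]; exact (Nat.choose_symm (by omega)).symm
      rw [h4]
      exact le_trans (Nat.choose_le_pow _ _) (Nat.pow_le_pow_left hr2 t)
    have hS : (stirling2 r K : ℝ) ≤ (N:ℝ)^t * (K:ℝ)^t := by
      have h5 : stirling2 r K ≤ N^t * K^t := by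
        calc stirling2 r K ≤ r.choose K * K^(r-K) := stirling2_le r K
          _ = r.choose K * K^t := by rw [ht]
          _ ≤ N^t * K^t := Nat.mul_le_mul_right _ hb3
      exact_mod_cast h5
    have hβr : P.coeff r ≤ (N:ℝ)^t * (N.choose K : ℝ) := by
      have h5 : (N.choose r : ℝ) ≤ (N:ℝ)^t * (N.choose K : ℝ) := by exact_mod_cast hb1
      exact le_trans (hup r) h5
    have hinv : (0:ℝ) < ((n:ℝ)^r)⁻¹ := by positivity
    have hstep : ((n:ℝ)^r)⁻¹ * P.coeff r * (stirling2 r K:ℝ)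
        ≤ ((n:ℝ)^r)⁻¹ * ((N:ℝ)^t * (N.choose K:ℝ)) * ((N:ℝ)^t * (K:ℝ)^t) := by
      apply mul_le_mul (mul_le_mul_of_nonneg_left hβr (le_of_lt hinv)) hS
        (Nat.cast_nonneg _)
      have := hβ_nonneg r
      positivity
    have hre : ((n:ℝ)^r)⁻¹ * ((N:ℝ)^t * (N.choose K:ℝ)) * ((N:ℝ)^t * (K:ℝ)^t)
        = (((n:ℝ)^K)⁻¹ * (N.choose K:ℝ)) * (((N:ℝ)*(N:ℝ)*(K:ℝ)/(n:ℝ))^t) := by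
      rw [hrKt, pow_add]
      have hnK : ((n:ℝ)^K) ≠ 0 := by positivity
      have hnt : ((n:ℝ)^t) ≠ 0 := by positivity
      field_simp
      rw [div_pow, mul_comm ((n:ℝ)^t), div_mul_cancel₀ _ hnt]
      ring
    have hbase0 : (0:ℝ) ≤ (N:ℝ)*(N:ℝ)*(K:ℝ)/(n:ℝ) := by positivity
    have hbase : (N:ℝ)*(N:ℝ)*(K:ℝ)/(n:ℝ) ≤ q := by
      rw [hqdef]
      have hb : (N:ℝ)*(N:ℝ)*(K:ℝ) ≤ ((m:ℝ)+1)^2*((K:ℝ)+1)^3 := by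
        rw [hNcast]
        have e2 := mul_le_mul_of_nonneg_left
          (show (K:ℝ) ≤ (K:ℝ)+1 by linarith)
          (show (0:ℝ) ≤ ((m:ℝ)+1)^2*((K:ℝ)+1)^2 by positivity)
        nlinarith [e2]
      gcongr
    have hpow : ((N:ℝ)*(N:ℝ)*(K:ℝ)/(n:ℝ))^t ≤ q^t := pow_le_pow_left₀ hbase0 hbase t
    have hD2 : ((n:ℝ)^K)⁻¹ * (N.choose K:ℝ) ≤ 2*D := by
      have h6 : (N.choose K:ℝ) ≤ 2 * P.coeff K := by linarith
      have h7 : (0:ℝ) ≤ ((n:ℝ)^K)⁻¹ := by positivity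
      calc ((n:ℝ)^K)⁻¹ * (N.choose K:ℝ) ≤ ((n:ℝ)^K)⁻¹ * (2 * P.coeff K) :=
            mul_le_mul_of_nonneg_left h6 h7
        _ = 2*D := by rw [hD]; ring
    calc ((n:ℝ)^r)⁻¹ * P.coeff r * (stirling2 r K:ℝ)
        ≤ (((n:ℝ)^K)⁻¹ * (N.choose K:ℝ)) * (((N:ℝ)*(N:ℝ)*(K:ℝ)/(n:ℝ))^t) :=
          hstep.trans_eq hre
      _ ≤ (2*D) * q^t := by
          apply mul_le_mul hD2 hpow (pow_nonneg hbase0 t) (by linarith)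
      _ = 2*D*q^t := by ring
  -- sum split
  have hKmem : K ∉ Finset.Icc (K+1) N := by simp
  have hIcc : Finset.Icc K N = insert K (Finset.Icc (K+1) N) := by
    ext x
    simp only [Finset.mem_Icc, Finset.mem_insert]
    omega
  set rest := ∑ r ∈ Finset.Icc (K+1) N,
    ((n:ℝ)^r)⁻¹ * P.coeff r * (stirling2 r K:ℝ) with hrestdef
  have hsum : ∑ r ∈ Finset.Icc K N, ((n:ℝ)^r)⁻¹ * P.coeff r * (stirling2 r K:ℝ)
      = D + rest := by
    rw [hIcc, Finset.sum_insert hKmem, stirling2_self]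
    push_cast
    rw [hD]
    ring
  have hrest0 : 0 ≤ rest :=
    Finset.sum_nonneg fun r _ => by
      have := hβ_nonneg r
      positivity
  have hmap : ∑ r ∈ Finset.Icc (K+1) N, q^(r-K) = ∑ s ∈ Finset.Icc 1 (N-K), q^s := by
    apply Finset.sum_nbij' (i := fun r => r - K) (j := fun s => s + K)
    · intro a ha
      simp only [Finset.mem_Icc] at ha ⊢
      omega
    · intro a ha
      simp only [Finset.mem_Icc] at ha ⊢
      omega
    · intro a ha
      simp only [Finset.mem_Icc] at ha
      omega
    · intro a ha
      simp only [Finset.mem_Icc] at ha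
      omega
    · intro a ha
      rfl
  have hrestle : rest ≤ 4*D*q := by
    calc rest ≤ ∑ r ∈ Finset.Icc (K+1) N, 2*D*q^(r-K) := Finset.sum_le_sum hterm
      _ = 2*D * ∑ r ∈ Finset.Icc (K+1) N, q^(r-K) := by
          rw [Finset.mul_sum]
      _ ≤ 2*D * (2*q) := by
          apply mul_le_mul_of_nonneg_left _ (by linarith)
          rw [hmap]
          exact geom_aux' hq0 hq (N-K)
      _ = 4*D*q := by ring
  rw [hsum]
  have hDne : D ≠ 0 := ne_of_gt hDpos
  have hfe : (D + rest)/D = 1 + rest/D := by field_simp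
  rw [hfe]
  constructor
  · have : 0 ≤ rest/D := div_nonneg hrest0 (le_of_lt hDpos)
    linarith
  · have h8 : rest/D ≤ 4*q := by
      rw [div_le_iff₀ hDpos]
      calc rest ≤ 4*D*q := hrestle
        _ = 4*q*D := by ring
    linarith


theorem stmt10 (m : ℕ) (hm : 1 ≤ m) (w : ℝ) (hw : 0 < w) :
    Tendsto
      (fun n : ℕ =>
        (∑ r ∈ Finset.Icc (⌈w * Real.log n⌉₊ - 1) (⌈w * Real.log n⌉₊ * (m + 1)),
            ((n : ℝ) ^ r)⁻¹ *
              (∏ i ∈ Finset.range ⌈w * Real.log n⌉₊,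
                (Polynomial.C (1 - (i : ℝ) / n) + Polynomial.X) ^ (m + 1)).coeff r *
              (stirling2 r (⌈w * Real.log n⌉₊ - 1) : ℝ)) /
          (((n : ℝ) ^ (⌈w * Real.log n⌉₊ - 1))⁻¹ *
            (∏ i ∈ Finset.range ⌈w * Real.log n⌉₊,
              (Polynomial.C (1 - (i : ℝ) / n) + Polynomial.X) ^ (m + 1)).coeff
                (⌈w * Real.log n⌉₊ - 1)))
      atTop (nhds 1) := by
  have h0 : Filter.Tendsto (fun n : ℕ => ((m:ℝ)+1)^2*(w+1)^3*(Real.log n)^3/n)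
      Filter.atTop (nhds 0) := by
    have h1 := (Real.tendsto_pow_log_div_mul_add_atTop 1 0 3 one_ne_zero).comp
      tendsto_natCast_atTop_atTop (α := ℕ)
    have h2 := h1.const_mul (((m:ℝ)+1)^2*(w+1)^3)
    simp only [Function.comp_def, one_mul, add_zero, mul_zero] at h2
    convert h2 using 2 with n
    ring
  have hlim : Filter.Tendsto (fun n : ℕ => 1 + 4*(((m:ℝ)+1)^2*(w+1)^3*(Real.log n)^3/n))
      Filter.atTop (nhds 1) := by
    have := (tendsto_const_nhds (x := (1:ℝ)) (f := Filter.atTop (α := ℕ))).add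
      (h0.const_mul 4)
    simpa using this
  have hlogs : ∀ᶠ n : ℕ in Filter.atTop, 1 ≤ Real.log n :=
    (Real.tendsto_log_atTop.comp tendsto_natCast_atTop_atTop (α := ℕ)).eventually_ge_atTop 1
  have hsmall : ∀ᶠ n : ℕ in Filter.atTop, ((m:ℝ)+1)^2*((w+1)*Real.log n)^3/n ≤ 1/2 := by
    have := h0.eventually_le_const (show (0:ℝ) < 1/2 by norm_num)
    filter_upwards [this] with n hn
    calc ((m:ℝ)+1)^2*((w+1)*Real.log n)^3/n
        = ((m:ℝ)+1)^2*(w+1)^3*(Real.log n)^3/n := by rw [mul_pow]; ring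
      _ ≤ 1/2 := hn
  -- key eventual facts bundled
  have hkey : ∀ᶠ n : ℕ in Filter.atTop,
      1 ≤ (fun n : ℕ =>
        (∑ r ∈ Finset.Icc (⌈w * Real.log n⌉₊ - 1) (⌈w * Real.log n⌉₊ * (m + 1)),
            ((n : ℝ) ^ r)⁻¹ *
              (∏ i ∈ Finset.range ⌈w * Real.log n⌉₊,
                (Polynomial.C (1 - (i : ℝ) / n) + Polynomial.X) ^ (m + 1)).coeff r *
              (stirling2 r (⌈w * Real.log n⌉₊ - 1) : ℝ)) /
          (((n : ℝ) ^ (⌈w * Real.log n⌉₊ - 1))⁻¹ *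
            (∏ i ∈ Finset.range ⌈w * Real.log n⌉₊,
              (Polynomial.C (1 - (i : ℝ) / n) + Polynomial.X) ^ (m + 1)).coeff
                (⌈w * Real.log n⌉₊ - 1))) n
      ∧ (fun n : ℕ =>
        (∑ r ∈ Finset.Icc (⌈w * Real.log n⌉₊ - 1) (⌈w * Real.log n⌉₊ * (m + 1)),
            ((n : ℝ) ^ r)⁻¹ *
              (∏ i ∈ Finset.range ⌈w * Real.log n⌉₊,
                (Polynomial.C (1 - (i : ℝ) / n) + Polynomial.X) ^ (m + 1)).coeff r *
              (stirling2 r (⌈w * Real.log n⌉₊ - 1) : ℝ)) /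
          (((n : ℝ) ^ (⌈w * Real.log n⌉₊ - 1))⁻¹ *
            (∏ i ∈ Finset.range ⌈w * Real.log n⌉₊,
              (Polynomial.C (1 - (i : ℝ) / n) + Polynomial.X) ^ (m + 1)).coeff
                (⌈w * Real.log n⌉₊ - 1))) n
          ≤ 1 + 4*(((m:ℝ)+1)^2*(w+1)^3*(Real.log n)^3/n) := by
    filter_upwards [hlogs, hsmall, Filter.eventually_ge_atTop 1] with n hlog hsm hn1
    have hn0 : (0:ℝ) < n := by exact_mod_cast hn1
    have hwl : 0 < w * Real.log n := mul_pos hw (by linarith)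
    have hk1 : 1 ≤ ⌈w * Real.log n⌉₊ := Nat.ceil_pos.mpr hwl
    set K := ⌈w * Real.log n⌉₊ - 1 with hKdef
    have hkK : ⌈w * Real.log n⌉₊ = K + 1 := by omega
    have hceil : (⌈w * Real.log n⌉₊ : ℝ) ≤ (w+1) * Real.log n := by
      have h1 : (⌈w * Real.log n⌉₊ : ℝ) < w * Real.log n + 1 :=
        Nat.ceil_lt_add_one (le_of_lt hwl)
      nlinarith
    have hKc : ((K:ℝ)+1) ≤ (w+1) * Real.log n := by
      rw [show ((K:ℝ)+1) = ((K+1 : ℕ):ℝ) by push_cast; ring, ← hkK]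
      exact hceil
    have hK0 : (0:ℝ) ≤ (K:ℝ)+1 := by positivity
    have hq : ((m:ℝ)+1)^2 * ((K:ℝ)+1)^3 / (n:ℝ) ≤ 1/2 := by
      refine le_trans ?_ hsm
      gcongr
    have hmain := main_bound m K n hm hn1 hq
    simp only [hkK, Nat.add_sub_cancel]
    refine ⟨hmain.1, le_trans hmain.2 ?_⟩
    have hstep : ((m:ℝ)+1)^2*((K:ℝ)+1)^3/(n:ℝ)
        ≤ ((m:ℝ)+1)^2*(w+1)^3*(Real.log n)^3/n := by
      have h2 : ((m:ℝ)+1)^2*((K:ℝ)+1)^3/(n:ℝ)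
          ≤ ((m:ℝ)+1)^2*((w+1)*Real.log n)^3/n := by
        gcongr
      calc ((m:ℝ)+1)^2*((K:ℝ)+1)^3/(n:ℝ)
          ≤ ((m:ℝ)+1)^2*((w+1)*Real.log n)^3/n := h2
        _ = ((m:ℝ)+1)^2*(w+1)^3*(Real.log n)^3/n := by rw [mul_pow]; ring
    linarith
  exact tendsto_of_tendsto_of_tendsto_of_le_of_le' tendsto_const_nhds hlim
    (hkey.mono fun n h => h.1) (hkey.mono fun n h => h.2)
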